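/- Let (N, ν) be a measure space with ν a finite measure and let Υ, A, Q : N → ℝ be bounded measurable functions. Let ε₀ > 0, C > 0, and let b : N × (0, ε₀) → (0, ∞) be measurable satisfying |b(x,ε) − exp( −Υ(x) − (1/4) e^{−2Υ(x)} A(x) ε² )| ≤ C ε³ for all x ∈ N and 0 < ε < ε₀. Then lim_{ε→0⁺} [ ∫_N ( −(1/2) ε^{−2} b(x,ε)^{−2} − (1/8) Q(x) · log b(x,ε) ) dν(x) + (1/2) ε^{−2} ∫_N e^{2Υ(x)} dν(x) ] = (1/8) ∫_N ( Q(x) Υ(x) − 2 A(x) ) dν(x). -/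

import Mathlib

open MeasureTheory Filter Set


lemma gw_log_abs_sub {m x y : ℝ} (hm : 0 < m) (hx : m ≤ x) (hy : m ≤ y) :
    |Real.log x - Real.log y| ≤ |x - y| / m := by
  have hx0 : 0 < x := lt_of_lt_of_le hm hx
  have hy0 : 0 < y := lt_of_lt_of_le hm hy
  rw [abs_sub_le_iff]
  constructor
  · rw [← Real.log_div hx0.ne' hy0.ne']
    calc Real.log (x / y) ≤ x / y - 1 := Real.log_le_sub_one_of_pos (div_pos hx0 hy0)
      _ = (x - y) / y := by field_simp
      _ ≤ |x - y| / m := div_le_div₀ (abs_nonneg _) (le_abs_self _) hm hy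
  · rw [← Real.log_div hy0.ne' hx0.ne']
    calc Real.log (y / x) ≤ y / x - 1 := Real.log_le_sub_one_of_pos (div_pos hy0 hx0)
      _ = (y - x) / x := by field_simp
      _ ≤ |x - y| / m := div_le_div₀ (abs_nonneg _) (by rw [abs_sub_comm]; exact le_abs_self _) hm hx

set_option maxHeartbeats 1000000 in
lemma gw_pointwise (Mυ Ma Mq C : ℝ) (hC : 0 < C)
    (υ a q bb ε : ℝ)
    (hυ : |υ| ≤ Mυ) (ha : |a| ≤ Ma) (hq : |q| ≤ Mq)
    (hε : 0 < ε) (hε1 : ε ≤ 1)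
    (hεC : C * ε ≤ Real.exp (-(Mυ + Real.exp (2 * Mυ) * Ma)) / 2)
    (hεa : Real.exp (2 * Mυ) * Ma * ε ≤ 1)
    (hb : |bb - Real.exp (-υ - (1 / 4) * Real.exp (-2 * υ) * a * ε ^ 2)| ≤ C * ε ^ 3) :
    |(-(1 / 2) * ε ^ (-2 : ℤ) * bb ^ (-2 : ℤ) - (1 / 8) * q * Real.log bb
        + (1 / 2) * ε ^ (-2 : ℤ) * Real.exp (2 * υ))
      - (1 / 8) * (q * υ - 2 * a)| ≤
    ((1 / 2) * (12 * C * Real.exp (5 * (Mυ + Real.exp (2 * Mυ) * Ma))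
          + Real.exp (6 * Mυ) * Ma ^ 2)
      + (1 / 8) * Mq * (2 * C * Real.exp (Mυ + Real.exp (2 * Mυ) * Ma)
          + Real.exp (2 * Mυ) * Ma)) * ε := by
  set K : ℝ := Mυ + Real.exp (2 * Mυ) * Ma with hK
  have hMυ0 : 0 ≤ Mυ := le_trans (abs_nonneg _) hυ
  have hMa0 : 0 ≤ Ma := le_trans (abs_nonneg _) ha
  have hMq0 : 0 ≤ Mq := le_trans (abs_nonneg _) hq
  have hK0 : 0 ≤ K := by positivity
  set u : ℝ := -υ - (1 / 4) * Real.exp (-2 * υ) * a * ε ^ 2 with hu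
  set e : ℝ := Real.exp u with he
  have hε2 : ε ^ 2 ≤ 1 := by nlinarith
  have hε3 : ε ^ 3 ≤ ε := by nlinarith
  have hexpm : Real.exp (-2 * υ) ≤ Real.exp (2 * Mυ) :=
    Real.exp_le_exp.mpr (by nlinarith [abs_le.mp hυ])
  have hX : (0:ℝ) ≤ Real.exp (2 * Mυ) * Ma := by positivity
  -- bound on the quadratic correction
  have hcabs : |(1 / 4) * Real.exp (-2 * υ) * a * ε ^ 2| ≤ (1 / 4) * Real.exp (2 * Mυ) * Ma := by
    have h1 : |(1 / 4) * Real.exp (-2 * υ) * a * ε ^ 2|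
        = (1 / 4) * Real.exp (-2 * υ) * |a| * ε ^ 2 := by
      rw [abs_mul, abs_mul, abs_mul]
      rw [abs_of_nonneg (by norm_num : (0:ℝ) ≤ (1:ℝ)/4), abs_of_nonneg (Real.exp_pos _).le,
        abs_of_nonneg (sq_nonneg ε)]
    rw [h1]
    calc (1 / 4) * Real.exp (-2 * υ) * |a| * ε ^ 2
        ≤ (1 / 4) * Real.exp (2 * Mυ) * Ma * 1 := by
          apply mul_le_mul _ hε2 (sq_nonneg ε) (by positivity)
          apply mul_le_mul _ ha (abs_nonneg _) (by positivity)
          apply mul_le_mul_of_nonneg_left hexpm (by norm_num)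
      _ = (1 / 4) * Real.exp (2 * Mυ) * Ma := by ring
  have huK : |u| ≤ K := by
    have hc := abs_le.mp hcabs
    have hυ' := abs_le.mp hυ
    rw [abs_le]
    constructor <;> (rw [hu]) <;> linarith [hc.1, hc.2, hυ'.1, hυ'.2]
  have heL : Real.exp (-K) ≤ e := Real.exp_le_exp.mpr (abs_le.mp huK).1
  have heU : e ≤ Real.exp K := Real.exp_le_exp.mpr (abs_le.mp huK).2
  have hKK : Real.exp (-K) ≤ Real.exp K := Real.exp_le_exp.mpr (by linarith)
  have hbe : |bb - e| ≤ C * ε ^ 3 := hb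
  have hCe3 : C * ε ^ 3 ≤ Real.exp (-K) / 2 := by
    calc C * ε ^ 3 ≤ C * ε := by nlinarith
      _ ≤ Real.exp (-K) / 2 := hεC
  have hbL : Real.exp (-K) / 2 ≤ bb := by
    have := (abs_le.mp hbe).1
    linarith
  have hbU : bb ≤ 2 * Real.exp K := by
    have := (abs_le.mp hbe).2
    have h2 : Real.exp (-K) / 2 ≤ Real.exp K := by linarith [Real.exp_pos (-K)]
    linarith
  have hb0 : 0 < bb := lt_of_lt_of_le (by positivity) hbL
  have he0 : 0 < e := Real.exp_pos _
  -- rewrite zpow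
  have hbz : bb ^ (-2 : ℤ) = (bb ^ 2)⁻¹ := by
    rw [zpow_neg]; norm_cast
  have hez : ε ^ (-2 : ℤ) = (ε ^ 2)⁻¹ := by
    rw [zpow_neg]; norm_cast
  -- Step 4 : |bb⁻² - e⁻²|
  have h4 : (bb ^ 2)⁻¹ - (e ^ 2)⁻¹ = (e - bb) * (e + bb) / (bb ^ 2 * e ^ 2) := by
    field_simp
    ring
  have hnum : |(e - bb) * (e + bb)| ≤ C * ε ^ 3 * (3 * Real.exp K) := by
    rw [abs_mul]
    apply mul_le_mul _ _ (abs_nonneg _) (by positivity)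
    · rw [abs_sub_comm]; exact hbe
    · rw [abs_of_nonneg (by positivity)]
      linarith
  have hden : Real.exp (-K) ^ 2 / 4 * Real.exp (-K) ^ 2 ≤ bb ^ 2 * e ^ 2 := by
    apply mul_le_mul _ _ (by positivity) (by positivity)
    · calc Real.exp (-K) ^ 2 / 4 = (Real.exp (-K) / 2) ^ 2 := by ring
        _ ≤ bb ^ 2 := by apply pow_le_pow_left₀ (by positivity) hbL
    · apply pow_le_pow_left₀ (by positivity) heL
  have hstep4 : |(bb ^ 2)⁻¹ - (e ^ 2)⁻¹| ≤ 12 * C * Real.exp (5 * K) * ε ^ 3 := by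
    rw [h4, abs_div]
    rw [abs_of_nonneg (by positivity : (0:ℝ) ≤ bb ^ 2 * e ^ 2)]
    calc |(e - bb) * (e + bb)| / (bb ^ 2 * e ^ 2)
        ≤ (C * ε ^ 3 * (3 * Real.exp K)) / (Real.exp (-K) ^ 2 / 4 * Real.exp (-K) ^ 2) :=
          div_le_div₀ (by positivity) hnum (by positivity) hden
      _ = 12 * C * Real.exp (5 * K) * ε ^ 3 := by
          rw [Real.exp_neg, show (5:ℝ) * K = ((5:ℕ):ℝ) * K by norm_num,
            Real.exp_nat_mul]
          have hR : Real.exp K ≠ 0 := (Real.exp_pos K).ne'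
          field_simp
          ring

  -- Step 5 : expansion of e⁻²
  set s : ℝ := (1 / 2) * Real.exp (-2 * υ) * a * ε ^ 2 with hs_def
  have he2 : (e ^ 2)⁻¹ = Real.exp (2 * υ) * Real.exp s := by
    rw [he, sq, ← Real.exp_add, ← Real.exp_neg, ← Real.exp_add]
    congr 1
    rw [hu, hs_def]; ring
  have hsabs : |s| ≤ (1 / 2) * Real.exp (2 * Mυ) * Ma * ε ^ 2 := by
    have h1 : |s| = (1 / 2) * Real.exp (-2 * υ) * |a| * ε ^ 2 := by
      rw [hs_def, abs_mul, abs_mul, abs_mul]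
      rw [abs_of_nonneg (by norm_num : (0:ℝ) ≤ (1:ℝ)/2), abs_of_nonneg (Real.exp_pos _).le,
        abs_of_nonneg (sq_nonneg ε)]
    rw [h1]
    apply mul_le_mul_of_nonneg_right _ (sq_nonneg ε)
    apply mul_le_mul _ ha (abs_nonneg _) (by positivity)
    apply mul_le_mul_of_nonneg_left hexpm (by norm_num)
  have hXε2 : Real.exp (2 * Mυ) * Ma * ε ^ 2 ≤ 1 := by
    calc Real.exp (2 * Mυ) * Ma * ε ^ 2 = (Real.exp (2 * Mυ) * Ma * ε) * ε := by ring
      _ ≤ 1 * ε := mul_le_mul_of_nonneg_right hεa hε.le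
      _ ≤ 1 := by linarith
  have hs1 : |s| ≤ 1 := by
    have h2 : (1 / 2) * Real.exp (2 * Mυ) * Ma * ε ^ 2
        = (1 / 2) * (Real.exp (2 * Mυ) * Ma * ε ^ 2) := by ring
    have := hsabs
    rw [h2] at this
    linarith
  have hexps := Real.abs_exp_sub_one_sub_id_le hs1
  have hes : Real.exp (2 * υ) * s = (1 / 2) * a * ε ^ 2 := by
    rw [hs_def, show Real.exp (2 * υ) * ((1 / 2) * Real.exp (-2 * υ) * a * ε ^ 2)
      = Real.exp (2 * υ) * Real.exp (-2 * υ) * ((1 / 2) * a * ε ^ 2) by ring,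
      ← Real.exp_add]
    norm_num
  have hexp2υ : Real.exp (2 * υ) ≤ Real.exp (2 * Mυ) :=
    Real.exp_le_exp.mpr (mul_le_mul_of_nonneg_left (abs_le.mp hυ).2 (by norm_num))
  have hstep5 : |(e ^ 2)⁻¹ - Real.exp (2 * υ) - (1 / 2) * a * ε ^ 2|
      ≤ Real.exp (6 * Mυ) * Ma ^ 2 * ε ^ 3 := by
    have h1 : (e ^ 2)⁻¹ - Real.exp (2 * υ) - (1 / 2) * a * ε ^ 2
        = Real.exp (2 * υ) * (Real.exp s - 1 - s) := by
      rw [he2, ← hes]; ring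
    rw [h1, abs_mul, abs_of_nonneg (Real.exp_pos _).le]
    have hs2 : s ^ 2 ≤ ((1 / 2) * Real.exp (2 * Mυ) * Ma * ε ^ 2) ^ 2 := by
      rw [← sq_abs]
      exact pow_le_pow_left₀ (abs_nonneg _) hsabs 2
    have h6 : Real.exp (6 * Mυ) = Real.exp (2 * Mυ) * (Real.exp (2 * Mυ) * Real.exp (2 * Mυ)) := by
      rw [← Real.exp_add, ← Real.exp_add]; congr 1; ring
    calc Real.exp (2 * υ) * |Real.exp s - 1 - s|
        ≤ Real.exp (2 * Mυ) * ((1 / 2) * Real.exp (2 * Mυ) * Ma * ε ^ 2) ^ 2 := by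
          apply mul_le_mul hexp2υ (le_trans hexps hs2) (abs_nonneg _) (Real.exp_pos _).le
      _ ≤ Real.exp (6 * Mυ) * Ma ^ 2 * ε ^ 3 := by
          rw [h6]
          calc Real.exp (2 * Mυ) * ((1 / 2) * Real.exp (2 * Mυ) * Ma * ε ^ 2) ^ 2
              = (1 / 4) * (Real.exp (2 * Mυ) * (Real.exp (2 * Mυ) * Real.exp (2 * Mυ)))
                  * Ma ^ 2 * (ε ^ 3 * ε) := by ring
            _ ≤ 1 * (Real.exp (2 * Mυ) * (Real.exp (2 * Mυ) * Real.exp (2 * Mυ)))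
                  * Ma ^ 2 * (ε ^ 3 * 1) := by gcongr <;> norm_num
            _ = Real.exp (2 * Mυ) * (Real.exp (2 * Mυ) * Real.exp (2 * Mυ)) * Ma ^ 2 * ε ^ 3 := by
                ring
  -- Step 6 : combined bound on the inverse-square part
  have hstep6 : |(bb ^ 2)⁻¹ - Real.exp (2 * υ) - (1 / 2) * a * ε ^ 2|
      ≤ (12 * C * Real.exp (5 * K) + Real.exp (6 * Mυ) * Ma ^ 2) * ε ^ 3 := by
    have h1 : (bb ^ 2)⁻¹ - Real.exp (2 * υ) - (1 / 2) * a * ε ^ 2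
        = ((bb ^ 2)⁻¹ - (e ^ 2)⁻¹) + ((e ^ 2)⁻¹ - Real.exp (2 * υ) - (1 / 2) * a * ε ^ 2) := by
      ring
    rw [h1]
    calc |((bb ^ 2)⁻¹ - (e ^ 2)⁻¹) + ((e ^ 2)⁻¹ - Real.exp (2 * υ) - (1 / 2) * a * ε ^ 2)|
        ≤ |(bb ^ 2)⁻¹ - (e ^ 2)⁻¹| + |(e ^ 2)⁻¹ - Real.exp (2 * υ) - (1 / 2) * a * ε ^ 2| :=
          abs_add_le _ _
      _ ≤ 12 * C * Real.exp (5 * K) * ε ^ 3 + Real.exp (6 * Mυ) * Ma ^ 2 * ε ^ 3 :=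
          add_le_add hstep4 hstep5
      _ = (12 * C * Real.exp (5 * K) + Real.exp (6 * Mυ) * Ma ^ 2) * ε ^ 3 := by ring
  -- Step 6b : the first group of terms
  have hT1 : |(-(1 / 2) * (ε ^ 2)⁻¹ * (bb ^ 2)⁻¹ + (1 / 2) * (ε ^ 2)⁻¹ * Real.exp (2 * υ))
        + (1 / 4) * a|
      ≤ (1 / 2) * (12 * C * Real.exp (5 * K) + Real.exp (6 * Mυ) * Ma ^ 2) * ε := by
    have hεne : (ε : ℝ) ≠ 0 := hε.ne'
    have h1 : (-(1 / 2) * (ε ^ 2)⁻¹ * (bb ^ 2)⁻¹ + (1 / 2) * (ε ^ 2)⁻¹ * Real.exp (2 * υ))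
          + (1 / 4) * a
        = -((1 / 2) * (ε ^ 2)⁻¹) * ((bb ^ 2)⁻¹ - Real.exp (2 * υ) - (1 / 2) * a * ε ^ 2) := by
      field_simp
      ring
    rw [h1, abs_mul, abs_neg, abs_of_nonneg (by positivity : (0:ℝ) ≤ (1 / 2) * (ε ^ 2)⁻¹)]
    calc (1 / 2) * (ε ^ 2)⁻¹ * |(bb ^ 2)⁻¹ - Real.exp (2 * υ) - (1 / 2) * a * ε ^ 2|
        ≤ (1 / 2) * (ε ^ 2)⁻¹
            * ((12 * C * Real.exp (5 * K) + Real.exp (6 * Mυ) * Ma ^ 2) * ε ^ 3) := by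
          apply mul_le_mul_of_nonneg_left hstep6 (by positivity)
      _ = (1 / 2) * (12 * C * Real.exp (5 * K) + Real.exp (6 * Mυ) * Ma ^ 2) * ε := by
          field_simp
  -- Step 7 : logarithm estimate
  have hloge : Real.log e = u := Real.log_exp u
  have hlog1 : |Real.log bb - Real.log e| ≤ 2 * C * Real.exp K * ε ^ 3 := by
    have h := gw_log_abs_sub (by positivity : (0:ℝ) < Real.exp (-K) / 2) hbL
      (by linarith : Real.exp (-K) / 2 ≤ e)
    calc |Real.log bb - Real.log e| ≤ |bb - e| / (Real.exp (-K) / 2) := h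
      _ ≤ (C * ε ^ 3) / (Real.exp (-K) / 2) :=
          div_le_div₀ (by positivity) hbe (by positivity) le_rfl
      _ = 2 * C * Real.exp K * ε ^ 3 := by
          rw [Real.exp_neg]
          field_simp
  -- Step 7 continued
  have hlog2 : |Real.log bb + υ| ≤ (2 * C * Real.exp K + Real.exp (2 * Mυ) * Ma) * ε ^ 2 := by
    have h1 : Real.log bb + υ = (Real.log bb - Real.log e) + (u + υ) := by
      rw [hloge]; ring
    have h2 : |u + υ| ≤ (1 / 4) * Real.exp (2 * Mυ) * Ma * ε ^ 2 := by
      have huυ : u + υ = -(s / 2) := by rw [hu, hs_def]; ring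
      rw [huυ, abs_neg, abs_div, abs_of_nonneg (by norm_num : (0:ℝ) ≤ (2:ℝ))]
      calc |s| / 2 ≤ ((1 / 2) * Real.exp (2 * Mυ) * Ma * ε ^ 2) / 2 := by
            apply div_le_div_of_nonneg_right hsabs (by norm_num) |>.trans_eq rfl
        _ = (1 / 4) * Real.exp (2 * Mυ) * Ma * ε ^ 2 := by ring
    have hε32 : (2 : ℝ) * C * Real.exp K * ε ^ 3 ≤ 2 * C * Real.exp K * ε ^ 2 := by
      have h3 : ε ^ 3 ≤ ε ^ 2 := by
        calc ε ^ 3 = ε ^ 2 * ε := by ring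
          _ ≤ ε ^ 2 * 1 := mul_le_mul_of_nonneg_left hε1 (sq_nonneg ε)
          _ = ε ^ 2 := by ring
      exact mul_le_mul_of_nonneg_left h3 (by positivity)
    calc |Real.log bb + υ| ≤ |Real.log bb - Real.log e| + |u + υ| := by
          rw [h1]; exact abs_add_le _ _
      _ ≤ 2 * C * Real.exp K * ε ^ 3 + (1 / 4) * Real.exp (2 * Mυ) * Ma * ε ^ 2 :=
          add_le_add hlog1 h2
      _ ≤ (2 * C * Real.exp K + Real.exp (2 * Mυ) * Ma) * ε ^ 2 := by
          have h5 : (1 / 4 : ℝ) * Real.exp (2 * Mυ) * Ma * ε ^ 2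
              ≤ Real.exp (2 * Mυ) * Ma * ε ^ 2 := by
            have h0 : (0:ℝ) ≤ Real.exp (2 * Mυ) * Ma * ε ^ 2 := by positivity
            have heq : (1 / 4 : ℝ) * Real.exp (2 * Mυ) * Ma * ε ^ 2
                = (1 / 4) * (Real.exp (2 * Mυ) * Ma * ε ^ 2) := by ring
            rw [heq]; linarith
          have := hε32
          ring_nf
          ring_nf at this h5
          linarith
  -- Step 8 : the log term
  have hstep8 : |(-(1 / 8) * q * Real.log bb) - (1 / 8) * q * υ|
      ≤ (1 / 8) * Mq * (2 * C * Real.exp K + Real.exp (2 * Mυ) * Ma) * ε := by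
    have h1 : (-(1 / 8) * q * Real.log bb) - (1 / 8) * q * υ
        = -((1 / 8) * q) * (Real.log bb + υ) := by ring
    rw [h1, abs_mul, abs_neg, abs_mul,
      abs_of_nonneg (by norm_num : (0:ℝ) ≤ (1:ℝ)/8)]
    calc 1 / 8 * |q| * |Real.log bb + υ|
        ≤ 1 / 8 * Mq * ((2 * C * Real.exp K + Real.exp (2 * Mυ) * Ma) * ε ^ 2) := by
          apply mul_le_mul (mul_le_mul_of_nonneg_left hq (by norm_num)) hlog2
            (abs_nonneg _) (by positivity)
      _ ≤ 1 / 8 * Mq * ((2 * C * Real.exp K + Real.exp (2 * Mυ) * Ma) * ε) := by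
          have h2 : ε ^ 2 ≤ ε := by
            calc ε ^ 2 = ε * ε := sq ε
              _ ≤ 1 * ε := mul_le_mul_of_nonneg_right hε1 hε.le
              _ = ε := one_mul ε
          have h0 : (0:ℝ) ≤ 2 * C * Real.exp K + Real.exp (2 * Mυ) * Ma := by positivity
          apply mul_le_mul_of_nonneg_left _ (by positivity)
          exact mul_le_mul_of_nonneg_left h2 h0
      _ = (1 / 8) * Mq * (2 * C * Real.exp K + Real.exp (2 * Mυ) * Ma) * ε := by ring
  -- Final assembly
  have hsplit : (-(1 / 2) * ε ^ (-2 : ℤ) * bb ^ (-2 : ℤ) - (1 / 8) * q * Real.log bb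
        + (1 / 2) * ε ^ (-2 : ℤ) * Real.exp (2 * υ)) - (1 / 8) * (q * υ - 2 * a)
      = ((-(1 / 2) * (ε ^ 2)⁻¹ * (bb ^ 2)⁻¹ + (1 / 2) * (ε ^ 2)⁻¹ * Real.exp (2 * υ))
          + (1 / 4) * a)
        + ((-(1 / 8) * q * Real.log bb) - (1 / 8) * q * υ) := by
    rw [hbz, hez]; ring
  rw [hsplit]
  calc |(((-(1 / 2) * (ε ^ 2)⁻¹ * (bb ^ 2)⁻¹ + (1 / 2) * (ε ^ 2)⁻¹ * Real.exp (2 * υ))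
          + (1 / 4) * a)
        + ((-(1 / 8) * q * Real.log bb) - (1 / 8) * q * υ))|
      ≤ |((-(1 / 2) * (ε ^ 2)⁻¹ * (bb ^ 2)⁻¹ + (1 / 2) * (ε ^ 2)⁻¹ * Real.exp (2 * υ))
          + (1 / 4) * a)|
        + |((-(1 / 8) * q * Real.log bb) - (1 / 8) * q * υ)| := abs_add_le _ _
    _ ≤ (1 / 2) * (12 * C * Real.exp (5 * K) + Real.exp (6 * Mυ) * Ma ^ 2) * ε
        + (1 / 8) * Mq * (2 * C * Real.exp K + Real.exp (2 * Mυ) * Ma) * ε :=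
        add_le_add hT1 hstep8
    _ = ((1 / 2) * (12 * C * Real.exp (5 * K) + Real.exp (6 * Mυ) * Ma ^ 2)
        + (1 / 8) * Mq * (2 * C * Real.exp K + Real.exp (2 * Mυ) * Ma)) * ε := by ring

set_option maxHeartbeats 1000000 in
theorem stmt_2
    {N : Type*} [MeasurableSpace N] (ν : Measure N) [IsFiniteMeasure ν]
    (Υ A Q : N → ℝ)
    (hΥ_meas : Measurable Υ) (hA_meas : Measurable A) (hQ_meas : Measurable Q)
    (hΥ_bdd : ∃ M : ℝ, ∀ x, |Υ x| ≤ M)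
    (hA_bdd : ∃ M : ℝ, ∀ x, |A x| ≤ M)
    (hQ_bdd : ∃ M : ℝ, ∀ x, |Q x| ≤ M)
    (ε₀ C : ℝ) (hε₀ : 0 < ε₀) (hC : 0 < C)
    (b : N → ℝ → ℝ)
    (hb_meas : Measurable (Function.uncurry b))
    (hb_pos : ∀ x, ∀ ε ∈ Ioo (0 : ℝ) ε₀, 0 < b x ε)
    (hb_approx : ∀ x, ∀ ε ∈ Ioo (0 : ℝ) ε₀,
      |b x ε - Real.exp (-Υ x - (1 / 4) * Real.exp (-2 * Υ x) * A x * ε ^ 2)|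
        ≤ C * ε ^ 3) :
    Tendsto (fun ε : ℝ =>
        (∫ x, (-(1 / 2) * ε ^ (-2 : ℤ) * (b x ε) ^ (-2 : ℤ)
            - (1 / 8) * Q x * Real.log (b x ε)) ∂ν)
        + (1 / 2) * ε ^ (-2 : ℤ) * ∫ x, Real.exp (2 * Υ x) ∂ν)
      (nhdsWithin 0 (Ioi 0))
      (nhds ((1 / 8) * ∫ x, (Q x * Υ x - 2 * A x) ∂ν)) := by
  obtain ⟨M₁, hM₁⟩ := hΥ_bdd
  obtain ⟨M₂, hM₂⟩ := hA_bdd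
  obtain ⟨M₃, hM₃⟩ := hQ_bdd
  set Mυ : ℝ := max M₁ 0 with hMυ_def
  set Ma : ℝ := max M₂ 0 with hMa_def
  set Mq : ℝ := max M₃ 0 with hMq_def
  have hΥ' : ∀ x, |Υ x| ≤ Mυ := fun x => (hM₁ x).trans (le_max_left _ _)
  have hA' : ∀ x, |A x| ≤ Ma := fun x => (hM₂ x).trans (le_max_left _ _)
  have hQ' : ∀ x, |Q x| ≤ Mq := fun x => (hM₃ x).trans (le_max_left _ _)
  have hMυ0 : 0 ≤ Mυ := le_max_right _ _
  have hMa0 : 0 ≤ Ma := le_max_right _ _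
  have hMq0 : 0 ≤ Mq := le_max_right _ _
  set K : ℝ := Mυ + Real.exp (2 * Mυ) * Ma with hK_def
  set D : ℝ := (1 / 2) * (12 * C * Real.exp (5 * K) + Real.exp (6 * Mυ) * Ma ^ 2)
      + (1 / 8) * Mq * (2 * C * Real.exp K + Real.exp (2 * Mυ) * Ma) with hD_def
  have hD0 : 0 ≤ D := by positivity
  set ε₁ : ℝ := min ε₀ (min 1 (min (Real.exp (-K) / (2 * C))
      (1 / (1 + Real.exp (2 * Mυ) * Ma)))) with hε₁_def
  have hXpos : (0:ℝ) < 1 + Real.exp (2 * Mυ) * Ma := by positivity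
  have hε₁pos : 0 < ε₁ := by
    apply lt_min hε₀
    apply lt_min one_pos
    apply lt_min (by positivity) (by positivity)
  set L : N → ℝ := fun x => (1 / 8) * (Q x * Υ x - 2 * A x) with hL_def
  set T : ℝ := (1 / 8) * ∫ x, (Q x * Υ x - 2 * A x) ∂ν with hT_def
  have hLm : Measurable L := ((hQ_meas.mul hΥ_meas).sub (hA_meas.const_mul 2)).const_mul (1 / 8)
  have hLbound : ∀ x, ‖L x‖ ≤ (1 / 8) * (Mq * Mυ + 2 * Ma) := by
    intro x
    rw [Real.norm_eq_abs, hL_def, abs_mul, abs_of_nonneg (by norm_num : (0:ℝ) ≤ (1:ℝ)/8)]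
    apply mul_le_mul_of_nonneg_left _ (by norm_num)
    calc |Q x * Υ x - 2 * A x| ≤ |Q x * Υ x| + |2 * A x| := abs_sub _ _
      _ = |Q x| * |Υ x| + 2 * |A x| := by rw [abs_mul, abs_mul]; norm_num
      _ ≤ Mq * Mυ + 2 * Ma := by
          have h1 : |Q x| * |Υ x| ≤ Mq * Mυ :=
            mul_le_mul (hQ' x) (hΥ' x) (abs_nonneg _) hMq0
          have h2 : 2 * |A x| ≤ 2 * Ma := by linarith [hA' x]
          linarith
  have hIL : Integrable L ν :=
    Integrable.mono' (integrable_const _) hLm.aestronglyMeasurable (ae_of_all _ hLbound)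
  have hIexp : Integrable (fun x => Real.exp (2 * Υ x)) ν := by
    apply Integrable.mono' (integrable_const (Real.exp (2 * Mυ)))
      (hΥ_meas.const_mul 2).exp.aestronglyMeasurable
    apply ae_of_all
    intro x
    rw [Real.norm_eq_abs, abs_of_nonneg (Real.exp_pos _).le]
    exact Real.exp_le_exp.mpr (mul_le_mul_of_nonneg_left (abs_le.mp (hΥ' x)).2 (by norm_num))
  have hTL : ∫ x, L x ∂ν = T := by
    rw [hT_def, hL_def]
    exact integral_const_mul (1 / 8) _
  -- the key quantitative bound for each ε in (0, ε₁)
  have key : ∀ ε ∈ Ioo (0:ℝ) ε₁,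
      ‖((∫ x, (-(1 / 2) * ε ^ (-2 : ℤ) * (b x ε) ^ (-2 : ℤ)
            - (1 / 8) * Q x * Real.log (b x ε)) ∂ν)
        + (1 / 2) * ε ^ (-2 : ℤ) * ∫ x, Real.exp (2 * Υ x) ∂ν) - T‖
      ≤ D * (ν univ).toReal * ε := by
    intro ε hε
    have hε0 : 0 < ε := hε.1
    have hεlt : ε < ε₁ := hε.2
    have hεε₀ : ε ∈ Ioo (0:ℝ) ε₀ := ⟨hε0, lt_of_lt_of_le hεlt (min_le_left _ _)⟩
    have hε1 : ε ≤ 1 := le_of_lt (lt_of_lt_of_le hεlt ((min_le_right _ _).trans (min_le_left _ _)))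
    have hεC : C * ε ≤ Real.exp (-K) / 2 := by
      have h1 : ε ≤ Real.exp (-K) / (2 * C) :=
        le_of_lt (lt_of_lt_of_le hεlt
          ((min_le_right _ _).trans ((min_le_right _ _).trans (min_le_left _ _))))
      calc C * ε ≤ C * (Real.exp (-K) / (2 * C)) :=
            mul_le_mul_of_nonneg_left h1 hC.le
        _ = Real.exp (-K) / 2 := by
            field_simp
    have hεa : Real.exp (2 * Mυ) * Ma * ε ≤ 1 := by
      have h1 : ε ≤ 1 / (1 + Real.exp (2 * Mυ) * Ma) :=
        le_of_lt (lt_of_lt_of_le hεlt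
          ((min_le_right _ _).trans ((min_le_right _ _).trans (min_le_right _ _))))
      have hX0 : (0:ℝ) ≤ Real.exp (2 * Mυ) * Ma := by positivity
      calc Real.exp (2 * Mυ) * Ma * ε
          ≤ Real.exp (2 * Mυ) * Ma * (1 / (1 + Real.exp (2 * Mυ) * Ma)) :=
            mul_le_mul_of_nonneg_left h1 hX0
        _ = Real.exp (2 * Mυ) * Ma / (1 + Real.exp (2 * Mυ) * Ma) := by ring
        _ ≤ 1 := by
            rw [div_le_one hXpos]
            linarith
    set f : N → ℝ := fun x => -(1 / 2) * ε ^ (-2 : ℤ) * (b x ε) ^ (-2 : ℤ)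
        - (1 / 8) * Q x * Real.log (b x ε) + (1 / 2) * ε ^ (-2 : ℤ) * Real.exp (2 * Υ x)
      with hf_def
    have hpt : ∀ x, |f x - L x| ≤ D * ε := by
      intro x
      have := gw_pointwise Mυ Ma Mq C hC (Υ x) (A x) (Q x) (b x ε) ε
        (hΥ' x) (hA' x) (hQ' x) hε0 hε1 hεC hεa (hb_approx x ε hεε₀)
      rw [hf_def, hL_def, hD_def]
      convert this using 2 <;> ring
    -- measurability of f
    have hbm : Measurable (fun x => b x ε) :=
      hb_meas.comp (measurable_id.prodMk measurable_const)
    have hz : ∀ y : ℝ, y ^ (-2 : ℤ) = (y ^ 2)⁻¹ := fun y => by rw [zpow_neg]; norm_cast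
    have hfm : Measurable f := by
      rw [hf_def]
      simp only [hz]
      apply Measurable.add
      · apply Measurable.sub
        · exact ((hbm.pow_const 2).inv).const_mul _
        · exact ((hQ_meas.const_mul _).mul hbm.log)
      · exact ((hΥ_meas.const_mul 2).exp.const_mul _)
    have hIfL : Integrable (fun x => f x - L x) ν :=
      Integrable.mono' (integrable_const (D * ε)) (hfm.sub hLm).aestronglyMeasurable
        (ae_of_all _ fun x => by rw [Real.norm_eq_abs]; exact hpt x)
    have hIf : Integrable f ν := by
      have h := hIfL.add hIL
      refine h.congr (ae_of_all _ fun x => ?_)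
      simp
    have hsplit : (∫ x, (-(1 / 2) * ε ^ (-2 : ℤ) * (b x ε) ^ (-2 : ℤ)
            - (1 / 8) * Q x * Real.log (b x ε)) ∂ν)
          + (1 / 2) * ε ^ (-2 : ℤ) * ∫ x, Real.exp (2 * Υ x) ∂ν
        = ∫ x, f x ∂ν := by
      have h1 : (1 / 2 : ℝ) * ε ^ (-2 : ℤ) * ∫ x, Real.exp (2 * Υ x) ∂ν
          = ∫ x, (1 / 2) * ε ^ (-2 : ℤ) * Real.exp (2 * Υ x) ∂ν :=
        (integral_const_mul _ _).symm
      have h2 : Integrable (fun x => (1 / 2 : ℝ) * ε ^ (-2 : ℤ) * Real.exp (2 * Υ x)) ν :=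
        hIexp.const_mul _
      have h3 : Integrable (fun x => -(1 / 2 : ℝ) * ε ^ (-2 : ℤ) * (b x ε) ^ (-2 : ℤ)
          - (1 / 8) * Q x * Real.log (b x ε)) ν := by
        have := hIf.sub h2
        apply this.congr
        apply ae_of_all
        intro x
        simp only [hf_def, Pi.sub_apply]
        ring
      rw [h1, ← integral_add h3 h2]
    rw [hsplit, ← hTL, ← integral_sub hIf hIL]
    calc ‖∫ x, (f x - L x) ∂ν‖ ≤ (D * ε) * (ν univ).toReal :=
        norm_integral_le_of_norm_le_const
          (ae_of_all _ fun x => by rw [Real.norm_eq_abs]; exact hpt x)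
      _ = D * (ν univ).toReal * ε := by ring
  -- conclude by squeezing
  have h1 : Tendsto (fun ε : ℝ =>
      ((∫ x, (-(1 / 2) * ε ^ (-2 : ℤ) * (b x ε) ^ (-2 : ℤ)
            - (1 / 8) * Q x * Real.log (b x ε)) ∂ν)
        + (1 / 2) * ε ^ (-2 : ℤ) * ∫ x, Real.exp (2 * Υ x) ∂ν) - T)
      (nhdsWithin 0 (Ioi 0)) (nhds 0) := by
    apply squeeze_zero_norm'
    · filter_upwards [Ioo_mem_nhdsGT_of_mem (⟨le_refl 0, hε₁pos⟩ : (0:ℝ) ∈ Ico 0 ε₁)]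
        with ε hε
      exact key ε hε
    · have h2 : Tendsto (fun ε : ℝ => D * (ν univ).toReal * ε)
          (nhdsWithin 0 (Ioi 0)) (nhds (D * (ν univ).toReal * 0)) :=
        (tendsto_id.const_mul _).mono_left nhdsWithin_le_nhds
      simpa using h2
  have h3 := h1.add_const T
  simp only [sub_add_cancel, zero_add] at h3
  exact h3
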